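/- Let ε > 0 and let Λ : (−ε, ε) → GL(d, ℝ) be a differentiable family of invertible real d×d matrices such that for every τ the derivative of ω(τ) = Λ(τ)ᵀ·Λ(τ) at τ is positive semidefinite. Then the function τ ↦ |det Λ(τ)| is non-decreasing on (−ε, ε). -/

import Mathlib

open scoped Matrix

open Matrix
-- Jacobi's formula (pointwise, as sum of updateColumn determinants)
lemma aux_hasDerivAt_det {d : ℕ} (A : ℝ → Matrix (Fin d) (Fin d) ℝ)
    (A' : Matrix (Fin d) (Fin d) ℝ) (τ : ℝ)
    (h : ∀ i j, HasDerivAt (fun t => A t i j) (A' i j) τ) :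
    HasDerivAt (fun t => (A t).det)
      (∑ i, ((A τ).updateCol i (fun k => A' k i)).det) τ := by
  have key : ∀ σ : Equiv.Perm (Fin d),
      HasDerivAt (fun t => ∏ i, A t (σ i) i)
        (∑ i, (∏ j ∈ Finset.univ.erase i, A τ (σ j) j) * A' (σ i) i) τ := by
    intro σ
    have := HasDerivAt.fun_finsetProd (u := Finset.univ)
      (f := fun i t => A t (σ i) i) (f' := fun i => A' (σ i) i) (x := τ)
      (fun i _ => h (σ i) i)
    simpa [smul_eq_mul] using this
  have H : HasDerivAt (fun t => (A t).det)
      (∑ σ : Equiv.Perm (Fin d), (Equiv.Perm.sign σ : ℝ) *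
        ∑ i, (∏ j ∈ Finset.univ.erase i, A τ (σ j) j) * A' (σ i) i) τ := by
    have := HasDerivAt.fun_sum (u := Finset.univ)
      (A := fun (σ : Equiv.Perm (Fin d)) t =>
        (Equiv.Perm.sign σ : ℝ) * ∏ i, A t (σ i) i)
      (A' := fun σ => (Equiv.Perm.sign σ : ℝ) *
        ∑ i, (∏ j ∈ Finset.univ.erase i, A τ (σ j) j) * A' (σ i) i)
      (x := τ) (fun σ _ => (key σ).const_mul _)
    have e : (fun t => (A t).det) =
        fun t => ∑ σ : Equiv.Perm (Fin d), (Equiv.Perm.sign σ : ℝ) * ∏ i, A t (σ i) i := by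
      funext t
      simp [Matrix.det_apply']
    rw [e]
    exact this
  convert H using 1
  simp_rw [Finset.mul_sum]
  rw [Finset.sum_comm]
  refine Finset.sum_congr rfl fun i _ => ?_
  rw [Matrix.det_apply']
  refine Finset.sum_congr rfl fun σ _ => ?_
  rw [mul_comm ((Equiv.Perm.sign σ : ℝ)) _]
  rw [← Finset.mul_prod_erase Finset.univ _ (Finset.mem_univ i)]
  have h1 : ((A τ).updateCol i fun k => A' k i) (σ i) i = A' (σ i) i := by
    simp [Matrix.updateCol_apply]
  have h2 : ∀ j ∈ Finset.univ.erase i,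
      ((A τ).updateCol i fun k => A' k i) (σ j) j = A τ (σ j) j := by
    intro j hj
    simp [Matrix.updateCol_apply, Finset.ne_of_mem_erase hj]
  rw [h1, Finset.prod_congr rfl h2]
  ring

lemma aux_sum_updateColumn {d : ℕ} (A A' : Matrix (Fin d) (Fin d) ℝ) :
    (∑ i, (A.updateCol i (fun k => A' k i)).det) = (A.adjugate * A').trace := by
  simp only [← Matrix.cramer_apply, Matrix.cramer_eq_adjugate_mulVec]
  simp [Matrix.trace, Matrix.mul_apply, Matrix.mulVec, dotProduct, Matrix.diag]

lemma aux_trace_mul_nonneg {n : ℕ} {P Q : Matrix (Fin n) (Fin n) ℝ}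
    (hP : P.PosSemidef) (hQ : Q.PosSemidef) : 0 ≤ (P * Q).trace := by
  obtain ⟨B, rfl⟩ : ∃ B : Matrix (Fin n) (Fin n) ℝ, Q = Bᴴ * B := by
    open scoped MatrixOrder in
    have h0 : 0 ≤ Q := Matrix.nonneg_iff_posSemidef.mpr hQ
    refine ⟨CFC.sqrt Q, ?_⟩
    have hs : IsSelfAdjoint (CFC.sqrt Q) := (CFC.sqrt_nonneg Q).isSelfAdjoint
    rw [show (CFC.sqrt Q)ᴴ = CFC.sqrt Q from hs, CFC.sqrt_mul_sqrt_self Q h0]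
  have h := hP.mul_mul_conjTranspose_same B
  have htr : (P * (Bᴴ * B)).trace = (B * P * Bᴴ).trace := by
    rw [← mul_assoc, Matrix.trace_mul_comm, ← mul_assoc]
  rw [htr]
  have : ∀ i, 0 ≤ (B * P * Bᴴ) i i := by
    intro i
    have := h.dotProduct_mulVec_nonneg (Pi.single i 1)
    simpa [dotProduct, Matrix.mulVec, Pi.single_apply, Finset.sum_ite_eq,
      Finset.sum_ite_eq'] using this
  exact Finset.sum_nonneg fun i _ => this i

/-- If `Λ : (-ε, ε) → GL(d, ℝ)` is a differentiable family of invertible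
matrices such that the derivative of the Gram curve `ω(τ) = Λ(τ)ᵀ·Λ(τ)` is positive
semidefinite at every `τ`, then `τ ↦ |det Λ(τ)|` is non-decreasing on `(-ε, ε)`. -/
theorem stmt_6 (d : ℕ) (ε : ℝ) (hε : 0 < ε)
    (Λ Λ' : ℝ → Matrix (Fin d) (Fin d) ℝ)
    (hinv : ∀ τ ∈ Set.Ioo (-ε) ε, IsUnit (Λ τ).det)
    (hderiv : ∀ τ ∈ Set.Ioo (-ε) ε, ∀ i j,
      HasDerivAt (fun t => Λ t i j) (Λ' τ i j) τ)
    (hpsd : ∀ τ ∈ Set.Ioo (-ε) ε,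
      Matrix.PosSemidef
        (Matrix.of fun i j => deriv (fun t => ((Λ t)ᵀ * Λ t) i j) τ)) :
    MonotoneOn (fun τ => |(Λ τ).det|) (Set.Ioo (-ε) ε) := by
  set ω : ℝ → Matrix (Fin d) (Fin d) ℝ := fun t => (Λ t)ᵀ * Λ t with hω
  set ω' : ℝ → Matrix (Fin d) (Fin d) ℝ :=
    fun t => (Λ' t)ᵀ * Λ t + (Λ t)ᵀ * Λ' t with hω'
  -- entrywise derivative of the Gram curve
  have hωderiv : ∀ τ ∈ Set.Ioo (-ε) ε, ∀ i j,
      HasDerivAt (fun t => ω t i j) (ω' τ i j) τ := by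
    intro τ hτ i j
    have H : HasDerivAt (fun t => ∑ k, Λ t k i * Λ t k j)
        (∑ k, (Λ' τ k i * Λ τ k j + Λ τ k i * Λ' τ k j)) τ :=
      HasDerivAt.fun_sum fun k _ => (hderiv τ hτ k i).mul (hderiv τ hτ k j)
    have e1 : (fun t => ω t i j) = fun t => ∑ k, Λ t k i * Λ t k j := by
      funext t
      simp [hω, Matrix.mul_apply, Matrix.transpose_apply]
    have e2 : ω' τ i j = ∑ k, (Λ' τ k i * Λ τ k j + Λ τ k i * Λ' τ k j) := by
      simp [hω', Matrix.add_apply, Matrix.mul_apply, Matrix.transpose_apply,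
        Finset.sum_add_distrib]
    rw [e1, e2]
    exact H
  -- the PSD hypothesis identifies with ω'
  have hψ : ∀ τ ∈ Set.Ioo (-ε) ε, (ω' τ).PosSemidef := by
    intro τ hτ
    have h := hpsd τ hτ
    have : (Matrix.of fun i j => deriv (fun t => ((Λ t)ᵀ * Λ t) i j) τ) = ω' τ := by
      funext i j
      exact (hωderiv τ hτ i j).deriv
    rwa [this] at h
  -- ω is positive definite on the interval
  have hPD : ∀ τ ∈ Set.Ioo (-ε) ε, (ω τ).PosDef := by
    intro τ hτ
    refine Matrix.PosDef.of_dotProduct_mulVec_pos ?_ ?_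
    · rw [Matrix.IsHermitian, Matrix.conjTranspose_eq_transpose_of_trivial]
      simp [hω, Matrix.transpose_mul]
    · intro x hx
      have hxv : Λ τ *ᵥ x ≠ 0 := by
        intro h0
        apply hx
        have hinj := Matrix.mulVec_injective_iff_isUnit.mpr
          ((Matrix.isUnit_iff_isUnit_det _).mpr (hinv τ hτ))
        apply hinj
        simpa [Matrix.mulVec_zero] using h0
      have e : star x ⬝ᵥ (ω τ) *ᵥ x = (Λ τ *ᵥ x) ⬝ᵥ (Λ τ *ᵥ x) := by
        rw [hω]
        rw [← Matrix.mulVec_mulVec, Matrix.dotProduct_mulVec, Matrix.vecMul_transpose]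
        simp
      rw [e]
      rcases lt_or_eq_of_le (Finset.sum_nonneg fun i _ =>
        mul_self_nonneg ((Λ τ *ᵥ x) i) : (0:ℝ) ≤ (Λ τ *ᵥ x) ⬝ᵥ (Λ τ *ᵥ x)) with h | h
      · exact h
      · exact absurd (dotProduct_self_eq_zero.mp h.symm) hxv
  -- the determinant of ω has nonnegative derivative
  set g : ℝ → ℝ := fun t => (ω t).det with hg
  set g' : ℝ → ℝ := fun t => ((ω t).adjugate * ω' t).trace with hg'
  have hgderiv : ∀ τ ∈ Set.Ioo (-ε) ε, HasDerivAt g (g' τ) τ := by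
    intro τ hτ
    have := aux_hasDerivAt_det ω (ω' τ) τ (hωderiv τ hτ)
    rwa [aux_sum_updateColumn] at this
  have hg'0 : ∀ τ ∈ Set.Ioo (-ε) ε, 0 ≤ g' τ := by
    intro τ hτ
    have hdet : 0 < (ω τ).det := (hPD τ hτ).det_pos
    have hadj : (ω τ).adjugate = (ω τ).det • (ω τ)⁻¹ := by
      rw [Matrix.inv_def, smul_smul, Ring.mul_inverse_cancel _ hdet.ne'.isUnit, one_smul]
    have hinvPSD : ((ω τ)⁻¹).PosSemidef := ((hPD τ hτ).inv).posSemidef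
    have : g' τ = (ω τ).det * ((ω τ)⁻¹ * ω' τ).trace := by
      show ((ω τ).adjugate * ω' τ).trace = _
      rw [hadj, Matrix.smul_mul, Matrix.trace_smul, smul_eq_mul]
    rw [this]
    exact mul_nonneg hdet.le (aux_trace_mul_nonneg hinvPSD (hψ τ hτ))
  -- g is monotone on the interval
  have hgmono : MonotoneOn g (Set.Ioo (-ε) ε) := by
    apply monotoneOn_of_hasDerivWithinAt_nonneg (convex_Ioo _ _) (f' := g')
    · intro τ hτ
      exact ((hgderiv τ hτ).continuousAt).continuousWithinAt
    · intro τ hτ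
      rw [interior_Ioo] at hτ
      exact ((hgderiv τ hτ).hasDerivWithinAt)
    · intro τ hτ
      rw [interior_Ioo] at hτ
      exact hg'0 τ hτ
  -- conclude: |det Λ| = sqrt (g)
  have habs : ∀ τ, |(Λ τ).det| = Real.sqrt (g τ) := by
    intro τ
    have : g τ = ((Λ τ).det) ^ 2 := by
      simp [hg, hω, Matrix.det_mul, Matrix.det_transpose, sq]
    rw [this, Real.sqrt_sq_eq_abs]
  intro a ha b hb hab
  simp only
  rw [habs a, habs b]
  exact Real.sqrt_le_sqrt (hgmono ha hb hab)
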